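/- For all n ≥ 0, Σ_{k=0}^n [n choose k]_q q^{k²} z^k (z;q)_n (qz;q)_n / ((z;q)_{n-k}(qz;q)_k) = (q^n z²; q)_n. -/

import Mathlib

/-- The q-Pochhammer symbol `(a;q)_n`. -/
noncomputable def qPoch (a q : ℝ) (n : ℕ) : ℝ := ∏ j ∈ Finset.range n, (1 - q ^ j * a)

/-- The Gaussian (q-)binomial coefficient `[n choose k]_q`. -/
noncomputable def qbinom (q : ℝ) (n k : ℕ) : ℝ :=
  qPoch q q n / (qPoch q q k * qPoch q q (n - k))

lemma qPoch_zero' (a q : ℝ) : qPoch a q 0 = 1 := by simp [qPoch]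

lemma qPoch_succ (a q : ℝ) (n : ℕ) : qPoch a q (n + 1) = qPoch a q n * (1 - q ^ n * a) := by
  simp [qPoch, Finset.prod_range_succ]

lemma qPoch_succ' (a q : ℝ) (n : ℕ) : qPoch a q (n + 1) = (1 - a) * qPoch (q * a) q n := by
  rw [qPoch, Finset.prod_range_succ', qPoch, mul_comm]
  congr 1
  · simp
  · exact Finset.prod_congr rfl fun i _ => by ring

lemma qPoch_q_pos (q : ℝ) (hq0 : 0 < q) (hq1 : q < 1) (n : ℕ) : 0 < qPoch q q n := by
  refine Finset.prod_pos fun j _ => ?_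
  have h : q ^ j * q = q ^ (j + 1) := by ring
  rw [h]
  have h2 : q ^ (j + 1) < 1 := pow_lt_one₀ hq0.le hq1 (Nat.succ_ne_zero j)
  linarith

lemma qPoch_shift_ne (q z : ℝ) (hz : ∀ j : ℕ, 1 - q ^ j * z ≠ 0) (m n : ℕ) :
    qPoch (q ^ m * z) q n ≠ 0 := by
  rw [qPoch]
  refine Finset.prod_ne_zero_iff.mpr fun j _ => ?_
  have h : (1 : ℝ) - q ^ j * (q ^ m * z) = 1 - q ^ (j + m) * z := by ring
  rw [h]; exact hz (j + m)

lemma qPoch_z_ne (q z : ℝ) (hz : ∀ j : ℕ, 1 - q ^ j * z ≠ 0) (n : ℕ) :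
    qPoch z q n ≠ 0 := by
  have := qPoch_shift_ne q z hz 0 n; simpa using this

lemma qPoch_qz_ne (q z : ℝ) (hz : ∀ j : ℕ, 1 - q ^ j * z ≠ 0) (n : ℕ) :
    qPoch (q * z) q n ≠ 0 := by
  have := qPoch_shift_ne q z hz 1 n; simpa using this

lemma qPoch_qqz_ne (q z : ℝ) (hz : ∀ j : ℕ, 1 - q ^ j * z ≠ 0) (n : ℕ) :
    qPoch (q * (q * z)) q n ≠ 0 := by
  have := qPoch_shift_ne q z hz 2 n
  rwa [show q ^ 2 * z = q * (q * z) by ring] at this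

lemma qbinom_zero (q : ℝ) (hq0 : 0 < q) (hq1 : q < 1) (n : ℕ) : qbinom q n 0 = 1 := by
  have h := (qPoch_q_pos q hq0 hq1 n).ne'
  simp [qbinom, qPoch_zero', div_self h]

lemma qbinom_self (q : ℝ) (hq0 : 0 < q) (hq1 : q < 1) (n : ℕ) : qbinom q n n = 1 := by
  have h := (qPoch_q_pos q hq0 hq1 n).ne'
  simp [qbinom, qPoch_zero', Nat.sub_self, div_self h]

lemma qPoch_q_succ (q : ℝ) (n : ℕ) : qPoch q q (n + 1) = qPoch q q n * (1 - q ^ (n + 1)) := by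
  rw [qPoch_succ]; ring

lemma one_sub_q_pow_ne (q : ℝ) (hq0 : 0 < q) (hq1 : q < 1) (t : ℕ) :
    (1 : ℝ) - q ^ (t + 1) ≠ 0 := by
  have h2 : q ^ (t + 1) < 1 := pow_lt_one₀ hq0.le hq1 (Nat.succ_ne_zero t)
  intro h; linarith

lemma pascal (q : ℝ) (hq0 : 0 < q) (hq1 : q < 1) (a b : ℕ) :
    qbinom q (a + b + 2) (a + 1)
      = q ^ (a + 1) * qbinom q (a + b + 1) (a + 1) + qbinom q (a + b + 1) a := by
  have h1 : a + b + 2 - (a + 1) = b + 1 := by omega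
  have h2 : a + b + 1 - (a + 1) = b := by omega
  have h3 : a + b + 1 - a = b + 1 := by omega
  rw [qbinom, qbinom, qbinom, h1, h2, h3]
  have hab : qPoch q q (a + b + 2) = qPoch q q (a + b + 1) * (1 - q ^ (a + b + 2)) :=
    qPoch_q_succ q (a + b + 1)
  have ha : qPoch q q (a + 1) = qPoch q q a * (1 - q ^ (a + 1)) := qPoch_q_succ q a
  have hb : qPoch q q (b + 1) = qPoch q q b * (1 - q ^ (b + 1)) := qPoch_q_succ q b
  rw [hab, ha, hb]
  have Pn := (qPoch_q_pos q hq0 hq1 (a + b + 1)).ne'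
  have Pa := (qPoch_q_pos q hq0 hq1 a).ne'
  have Pb := (qPoch_q_pos q hq0 hq1 b).ne'
  have e1 := one_sub_q_pow_ne q hq0 hq1 a
  have e2 := one_sub_q_pow_ne q hq0 hq1 b
  field_simp
  ring

lemma step (q z : ℝ) (hz : ∀ j : ℕ, 1 - q ^ j * z ≠ 0) (m k : ℕ) :
    q ^ k * (qbinom q (m + k) k * q ^ (k ^ 2) * z ^ k * qPoch z q (m + k + 1) *
        qPoch (q * z) q (m + k + 1) / (qPoch z q (m + 1) * qPoch (q * z) q k))
    + qbinom q (m + k) k * q ^ ((k + 1) ^ 2) * z ^ (k + 1) * qPoch z q (m + k + 1) *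
        qPoch (q * z) q (m + k + 1) / (qPoch z q m * qPoch (q * z) q (k + 1))
    = (1 - q ^ (m + k + 1) * z ^ 2) *
      (qbinom q (m + k) k * q ^ (k ^ 2) * (q * z) ^ k * qPoch (q * z) q (m + k) *
        qPoch (q * (q * z)) q (m + k) / (qPoch (q * z) q m * qPoch (q * (q * z)) q k)) := by
  have nz0 : (1 : ℝ) - z ≠ 0 := by simpa using hz 0
  have nz1 : (1 : ℝ) - q * z ≠ 0 := by simpa using hz 1
  have nzm : (1 : ℝ) - q ^ m * z ≠ 0 := hz m
  have nzk : (1 : ℝ) - q ^ (k + 1) * z ≠ 0 := hz (k + 1)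
  have h1 : qPoch z q (m + k + 1) = (1 - z) * qPoch (q * z) q (m + k) := qPoch_succ' z q (m + k)
  have h2 : qPoch (q * z) q (m + k + 1) = (1 - q * z) * qPoch (q * (q * z)) q (m + k) :=
    qPoch_succ' (q * z) q (m + k)
  have h3 : qPoch z q (m + 1) = (1 - z) * qPoch (q * z) q m := qPoch_succ' z q m
  have h4 : qPoch (q * z) q (k + 1) = (1 - q * z) * qPoch (q * (q * z)) q k :=
    qPoch_succ' (q * z) q k
  have h5 : qPoch z q m = (1 - z) * qPoch (q * z) q m / (1 - q ^ m * z) := by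
    rw [eq_div_iff nzm, ← qPoch_succ, qPoch_succ']
  have h6 : qPoch (q * z) q k = (1 - q * z) * qPoch (q * (q * z)) q k / (1 - q ^ (k + 1) * z) := by
    rw [eq_div_iff nzk]
    have := qPoch_succ (q * z) q k
    have h' : qPoch (q * z) q k * (1 - q ^ k * (q * z)) = (1 - q * z) * qPoch (q * (q * z)) q k := by
      rw [← qPoch_succ, qPoch_succ']
    calc qPoch (q * z) q k * (1 - q ^ (k + 1) * z)
        = qPoch (q * z) q k * (1 - q ^ k * (q * z)) := by ring
      _ = (1 - q * z) * qPoch (q * (q * z)) q k := h'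
  rw [h1, h2, h3, h4, h5, h6]
  have nU : qPoch (q * z) q m ≠ 0 := qPoch_qz_ne q z hz m
  have nW : qPoch (q * (q * z)) q k ≠ 0 := qPoch_qqz_ne q z hz k
  have nz1' : (1:ℝ) - z * q ≠ 0 := by rwa [mul_comm]
  field_simp
  ring


lemma sum_split (F A B : ℕ → ℝ) (n : ℕ)
    (h0 : F 0 = A 0) (hn : F (n + 1) = B n)
    (hmid : ∀ k, k < n → F (k + 1) = A (k + 1) + B k) :
    ∑ k ∈ Finset.range (n + 1 + 1), F k = ∑ k ∈ Finset.range (n + 1), (A k + B k) := by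
  rw [Finset.sum_range_succ' F (n + 1), Finset.sum_range_succ, Finset.sum_add_distrib,
    Finset.sum_range_succ' A n, Finset.sum_range_succ B n]
  have hc : ∑ k ∈ Finset.range n, F (k + 1) = ∑ k ∈ Finset.range n, (A (k + 1) + B k) :=
    Finset.sum_congr rfl fun k hk => hmid k (Finset.mem_range.mp hk)
  rw [hc, Finset.sum_add_distrib, h0, hn]
  ring

lemma main_identity (q : ℝ) (hq0 : 0 < q) (hq1 : q < 1) :
    ∀ n : ℕ, ∀ z : ℝ, (∀ j : ℕ, 1 - q ^ j * z ≠ 0) →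
      ∑ k ∈ Finset.range (n + 1),
        qbinom q n k * q ^ (k ^ 2) * z ^ k * qPoch z q n * qPoch (q * z) q n /
          (qPoch z q (n - k) * qPoch (q * z) q k)
        = qPoch (q ^ n * z ^ 2) q n := by
  intro n
  induction n with
  | zero =>
    intro z hz
    simp [qPoch, qbinom]
  | succ n ih =>
    intro z hz
    have hz' : ∀ j : ℕ, 1 - q ^ j * (q * z) ≠ 0 := by
      intro j
      have h := hz (j + 1)
      have e : q ^ (j + 1) * z = q ^ j * (q * z) := by ring
      rwa [e] at h
    have key : ∀ k, k ≤ n →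
        q ^ k * (qbinom q n k * q ^ (k ^ 2) * z ^ k * qPoch z q (n + 1) *
            qPoch (q * z) q (n + 1) / (qPoch z q (n + 1 - k) * qPoch (q * z) q k))
        + qbinom q n k * q ^ ((k + 1) ^ 2) * z ^ (k + 1) * qPoch z q (n + 1) *
            qPoch (q * z) q (n + 1) / (qPoch z q (n - k) * qPoch (q * z) q (k + 1))
        = (1 - q ^ (n + 1) * z ^ 2) *
          (qbinom q n k * q ^ (k ^ 2) * (q * z) ^ k * qPoch (q * z) q n *
            qPoch (q * (q * z)) q n / (qPoch (q * z) q (n - k) * qPoch (q * (q * z)) q k)) := by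
      intro k hk
      have hmk : n - k + k = n := Nat.sub_add_cancel hk
      have h1 : n + 1 - k = n - k + 1 := by omega
      have hstep := step q z hz (n - k) k
      rw [hmk] at hstep
      rw [h1]
      exact hstep
    have h0 : qbinom q (n + 1) 0 * q ^ (0 ^ 2) * z ^ 0 * qPoch z q (n + 1) *
        qPoch (q * z) q (n + 1) / (qPoch z q (n + 1 - 0) * qPoch (q * z) q 0)
        = q ^ 0 * (qbinom q n 0 * q ^ (0 ^ 2) * z ^ 0 * qPoch z q (n + 1) *
          qPoch (q * z) q (n + 1) / (qPoch z q (n + 1 - 0) * qPoch (q * z) q 0)) := by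
      rw [qbinom_zero q hq0 hq1, qbinom_zero q hq0 hq1]
      ring
    have hn : qbinom q (n + 1) (n + 1) * q ^ ((n + 1) ^ 2) * z ^ (n + 1) * qPoch z q (n + 1) *
        qPoch (q * z) q (n + 1) / (qPoch z q (n + 1 - (n + 1)) * qPoch (q * z) q (n + 1))
        = qbinom q n n * q ^ ((n + 1) ^ 2) * z ^ (n + 1) * qPoch z q (n + 1) *
          qPoch (q * z) q (n + 1) / (qPoch z q (n - n) * qPoch (q * z) q (n + 1)) := by
      rw [qbinom_self q hq0 hq1, qbinom_self q hq0 hq1, Nat.sub_self, Nat.sub_self]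
    have hmid : ∀ k, k < n →
        qbinom q (n + 1) (k + 1) * q ^ ((k + 1) ^ 2) * z ^ (k + 1) * qPoch z q (n + 1) *
          qPoch (q * z) q (n + 1) / (qPoch z q (n + 1 - (k + 1)) * qPoch (q * z) q (k + 1))
        = q ^ (k + 1) * (qbinom q n (k + 1) * q ^ ((k + 1) ^ 2) * z ^ (k + 1) * qPoch z q (n + 1) *
            qPoch (q * z) q (n + 1) / (qPoch z q (n + 1 - (k + 1)) * qPoch (q * z) q (k + 1)))
          + qbinom q n k * q ^ ((k + 1) ^ 2) * z ^ (k + 1) * qPoch z q (n + 1) *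
            qPoch (q * z) q (n + 1) / (qPoch z q (n - k) * qPoch (q * z) q (k + 1)) := by
      intro k hk
      have hp : qbinom q (n + 1) (k + 1) = q ^ (k + 1) * qbinom q n (k + 1) + qbinom q n k := by
        obtain ⟨b, hb⟩ : ∃ b, n = k + b + 1 := ⟨n - k - 1, by omega⟩
        subst hb
        exact pascal q hq0 hq1 k b
      have d1 : n + 1 - (k + 1) = n - k := by omega
      rw [hp, d1]
      ring
    have hsplit := sum_split
      (fun k => qbinom q (n + 1) k * q ^ (k ^ 2) * z ^ k * qPoch z q (n + 1) *
          qPoch (q * z) q (n + 1) / (qPoch z q (n + 1 - k) * qPoch (q * z) q k))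
      (fun k => q ^ k * (qbinom q n k * q ^ (k ^ 2) * z ^ k * qPoch z q (n + 1) *
          qPoch (q * z) q (n + 1) / (qPoch z q (n + 1 - k) * qPoch (q * z) q k)))
      (fun k => qbinom q n k * q ^ ((k + 1) ^ 2) * z ^ (k + 1) * qPoch z q (n + 1) *
          qPoch (q * z) q (n + 1) / (qPoch z q (n - k) * qPoch (q * z) q (k + 1)))
      n h0 hn hmid
    calc
      ∑ k ∈ Finset.range (n + 1 + 1),
          qbinom q (n + 1) k * q ^ (k ^ 2) * z ^ k * qPoch z q (n + 1) *
            qPoch (q * z) q (n + 1) / (qPoch z q (n + 1 - k) * qPoch (q * z) q k)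
        = ∑ k ∈ Finset.range (n + 1),
            (q ^ k * (qbinom q n k * q ^ (k ^ 2) * z ^ k * qPoch z q (n + 1) *
                qPoch (q * z) q (n + 1) / (qPoch z q (n + 1 - k) * qPoch (q * z) q k))
            + qbinom q n k * q ^ ((k + 1) ^ 2) * z ^ (k + 1) * qPoch z q (n + 1) *
                qPoch (q * z) q (n + 1) / (qPoch z q (n - k) * qPoch (q * z) q (k + 1))) := hsplit
      _ = ∑ k ∈ Finset.range (n + 1),
            ((1 - q ^ (n + 1) * z ^ 2) *
              (qbinom q n k * q ^ (k ^ 2) * (q * z) ^ k * qPoch (q * z) q n *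
                qPoch (q * (q * z)) q n /
                (qPoch (q * z) q (n - k) * qPoch (q * (q * z)) q k))) :=
          Finset.sum_congr rfl fun k hk => key k (Nat.lt_succ_iff.mp (Finset.mem_range.mp hk))
      _ = (1 - q ^ (n + 1) * z ^ 2) *
            ∑ k ∈ Finset.range (n + 1),
              qbinom q n k * q ^ (k ^ 2) * (q * z) ^ k * qPoch (q * z) q n *
                qPoch (q * (q * z)) q n /
                (qPoch (q * z) q (n - k) * qPoch (q * (q * z)) q k) := by
          rw [Finset.mul_sum]
      _ = (1 - q ^ (n + 1) * z ^ 2) * qPoch (q ^ n * (q * z) ^ 2) q n := by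
          rw [ih (q * z) hz']
      _ = qPoch (q ^ (n + 1) * z ^ 2) q (n + 1) := by
          rw [qPoch_succ' (q ^ (n + 1) * z ^ 2) q n,
            show q * (q ^ (n + 1) * z ^ 2) = q ^ n * (q * z) ^ 2 by ring]

theorem q_zeilberger_identity (q z : ℝ) (hq0 : 0 < q) (hq1 : q < 1)
    (hz : ∀ j : ℕ, 1 - q ^ j * z ≠ 0) :
    ∀ n : ℕ,
      ∑ k ∈ Finset.range (n + 1),
        qbinom q n k * q ^ (k ^ 2) * z ^ k * qPoch z q n * qPoch (q * z) q n /
          (qPoch z q (n - k) * qPoch (q * z) q k)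
        = qPoch (q ^ n * z ^ 2) q n := by
  intro n
  exact main_identity q hq0 hq1 n z hz
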